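/- Let f ∈ ℂ[x,y] be in normal form with deg f > 1 and let λ₀ ∈ ℂ. If 𝓛∞((f−λ₀, f'_y)) < 0, where (f−λ₀, f'_y) : ℂ² → ℂ² is the polynomial map z ↦ (f(z)−λ₀, f'_y(z)), then: (i) 𝓛∞((f−λ₀, f'_y)) = 𝓛∞(f−λ₀ | S_y); (ii) λ₀ ∈ Λ(f). Moreover, if additionally 𝓛∞((f−λ₀, f'_y)) ≠ −∞, then 𝓛∞(f−λ₀ | S_y) < 𝓛∞(f'_y | S_{λ₀}). -/

import Mathlib

open Polynomial

noncomputable section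
open scoped Classical

def MeroInf (φ : ℂ → ℂ) : Prop := MeromorphicAt (fun t => φ t⁻¹) 0

noncomputable def degInf (φ : ℂ → ℂ) : EReal :=
  if h : MeroInf φ then
    WithTop.recTopCoe (⊥ : EReal) (fun z : ℤ => (((-z : ℤ) : ℝ) : EReal))
      (meromorphicOrderAt (fun t => φ t⁻¹) 0)
  else ⊥

noncomputable def lojInfOn {E F : Type*} [NormedAddCommGroup E] [NormedAddCommGroup F]
    (f : E → F) (S : Set E) : EReal :=
  sSup (Real.toEReal '' {ν : ℝ | ∃ A B : ℝ, 0 < A ∧ 0 < B ∧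
    ∀ z ∈ S, B < ‖z‖ → A * Real.rpow ‖z‖ ν ≤ ‖f z‖})

def sylvester {R : Type*} [CommRing R] (p q : Polynomial R) (m n : ℕ) :
    Matrix (Fin (n + m)) (Fin (n + m)) R :=
  Matrix.of fun i j =>
    Fin.addCases
      (fun i₁ : Fin n => if (i₁ : ℕ) ≤ (j : ℕ) then p.coeff ((j : ℕ) - i₁) else 0)
      (fun i₂ : Fin m => if (i₂ : ℕ) ≤ (j : ℕ) then q.coeff ((j : ℕ) - i₂) else 0) i

noncomputable def resultant {R : Type*} [CommRing R] (p q : Polynomial R) : R :=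
  (_root_.sylvester p q p.natDegree q.natDegree).det

/-! 2-dimensional machinery, `f : (ℂ[x])[y]` -/

noncomputable def pval (f : Polynomial (Polynomial ℂ)) (x y : ℂ) : ℂ :=
  (f.map (evalRingHom x)).eval y

noncomputable def pderivX (f : Polynomial (Polynomial ℂ)) : Polynomial (Polynomial ℂ) :=
  f.sum fun i a => C (derivative a) * X ^ i

def NormalForm (f : Polynomial (Polynomial ℂ)) : Prop :=
  f.Monic ∧ ∀ i, (f.coeff i).natDegree ≤ f.natDegree - i

noncomputable def pgrad (f : Polynomial (Polynomial ℂ)) (z : ℂ × ℂ) : ℂ × ℂ :=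
  (pval (pderivX f) z.1 z.2, pval (derivative f) z.1 z.2)

def Sy (f : Polynomial (Polynomial ℂ)) : Set (ℂ × ℂ) :=
  {z | pval (derivative f) z.1 z.2 = 0}

def Sfib (f : Polynomial (Polynomial ℂ)) (lam : ℂ) : Set (ℂ × ℂ) :=
  {z | pval f z.1 z.2 = lam}

noncomputable def lojFiber2 (f : Polynomial (Polynomial ℂ)) (lam : ℂ) : EReal :=
  sInf {r : EReal | ∃ φ ψ : ℂ → ℂ, MeroInf φ ∧ MeroInf ψ ∧
    0 < max (degInf φ) (degInf ψ) ∧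
    degInf (fun t => pval f (φ t) (ψ t) - lam) < 0 ∧
    r = max (degInf fun t => pval (pderivX f) (φ t) (ψ t))
          (degInf fun t => pval (derivative f) (φ t) (ψ t)) / max (degInf φ) (degInf ψ)}

noncomputable def Qres (f : Polynomial (Polynomial ℂ)) :
    Polynomial (MvPolynomial (Fin 2) ℂ) :=
  let F : Polynomial (Polynomial (MvPolynomial (Fin 2) ℂ)) :=
    f.map (mapRingHom (MvPolynomial.C))
  _root_.resultant (F - C (C (MvPolynomial.X 0))) (derivative F - C (C (MvPolynomial.X 1)))

noncomputable def Qc (f : Polynomial (Polynomial ℂ)) (i : ℕ) : MvPolynomial (Fin 2) ℂ :=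
  (Qres f).coeff ((Qres f).natDegree - i)

noncomputable def Rres (f : Polynomial (Polynomial ℂ)) : Polynomial (Polynomial ℂ) :=
  let F : Polynomial (Polynomial (Polynomial ℂ)) := f.map (mapRingHom C)
  _root_.resultant (F - C (C X)) (derivative F)

def LambdaSet (f : Polynomial (Polynomial ℂ)) : Set ℂ :=
  {lam | ((Rres f).leadingCoeff).eval lam = 0}

noncomputable def ordAt (P : MvPolynomial (Fin 2) ℂ) (lam0 : ℂ) : EReal :=
  let P' : MvPolynomial (Fin 2) ℂ :=
    MvPolynomial.aeval ![MvPolynomial.C lam0 + MvPolynomial.X 0, MvPolynomial.X 1] P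
  if P' = 0 then ⊤
  else (((sInf {d : ℕ | ∃ m ∈ P'.support, m 0 + m 1 = d} : ℕ) : ℝ) : EReal)

noncomputable def Qu (P : MvPolynomial (Fin 2) ℂ) (lam0 : ℂ) : Polynomial ℂ :=
  MvPolynomial.aeval ![Polynomial.C lam0, Polynomial.X] P

/-! n-dimensional machinery -/

noncomputable def mval {n : ℕ} (f : MvPolynomial (Fin n) ℂ) (z : Fin n → ℂ) : ℂ :=
  MvPolynomial.eval z f

noncomputable def mgrad {n : ℕ} (f : MvPolynomial (Fin n) ℂ) (z : Fin n → ℂ) : Fin n → ℂ :=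
  fun i => MvPolynomial.eval z (MvPolynomial.pderiv i f)

def IsMeroCurve {n : ℕ} (Φ : ℂ → Fin n → ℂ) : Prop := ∀ i, MeroInf fun t => Φ t i

noncomputable def degCurve {n : ℕ} (Φ : ℂ → Fin n → ℂ) : EReal :=
  ⨆ i, degInf fun t => Φ t i

noncomputable def lojFiber {n : ℕ} (f : MvPolynomial (Fin n) ℂ) (lam : ℂ) : EReal :=
  sInf {r : EReal | ∃ Φ : ℂ → Fin n → ℂ, IsMeroCurve Φ ∧ 0 < degCurve Φ ∧
    degInf (fun t => mval f (Φ t) - lam) < 0 ∧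
    r = degCurve (fun t => mgrad f (Φ t)) / degCurve Φ}

noncomputable def lojTilde {n : ℕ} (f : MvPolynomial (Fin n) ℂ) (lam : ℂ) : EReal :=
  ⨆ δ : {d : ℝ // 0 < d}, lojInfOn (mgrad f) (mval f ⁻¹' Metric.ball lam δ.1)

def Kinf {n : ℕ} (f : MvPolynomial (Fin n) ℂ) : Set ℂ :=
  {lam | ¬ ∃ η δ R : ℝ, 0 < η ∧ 0 < δ ∧ 0 < R ∧
    ∀ p : Fin n → ℂ, R < ‖p‖ → ‖mval f p - lam‖ < δ → η < ‖p‖ * ‖mgrad f p‖}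

def KinfTilde {n : ℕ} (f : MvPolynomial (Fin n) ℂ) : Set ℂ :=
  {lam | ¬ ∃ η δ R : ℝ, 0 < η ∧ 0 < δ ∧ 0 < R ∧
    ∀ p : Fin n → ℂ, R < ‖p‖ → ‖mval f p - lam‖ < δ → η < ‖mgrad f p‖}




lemma mnorm_prod (s : Multiset ℂ) : ‖s.prod‖ = (s.map (fun z => ‖z‖)).prod := by
  induction s using Multiset.induction_on with
  | empty => simp
  | cons a t ih => simp [norm_mul, ih]

lemma mprod_le {s : Multiset ℂ} {f g : ℂ → ℝ} (h0 : ∀ r ∈ s, 0 ≤ f r)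
    (h : ∀ r ∈ s, f r ≤ g r) : (s.map f).prod ≤ (s.map g).prod := by
  induction s using Multiset.induction_on with
  | empty => simp
  | cons a t ih =>
    simp only [Multiset.map_cons, Multiset.prod_cons]
    have hf0 : (0:ℝ) ≤ (t.map f).prod := by
      apply Multiset.prod_nonneg
      intro x hx
      obtain ⟨r, hr, rfl⟩ := Multiset.mem_map.mp hx
      exact h0 r (Multiset.mem_cons_of_mem hr)
    exact mul_le_mul (h a (Multiset.mem_cons_self a t))
      (ih (fun r hr => h0 r (Multiset.mem_cons_of_mem hr))
        (fun r hr => h r (Multiset.mem_cons_of_mem hr))) hf0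
      ((h0 a (Multiset.mem_cons_self a t)).trans (h a (Multiset.mem_cons_self a t)))

lemma mpow_le_prod {s : Multiset ℂ} {c : ℝ} (hc : 0 ≤ c) {f : ℂ → ℝ}
    (h : ∀ r ∈ s, c ≤ f r) : c ^ Multiset.card s ≤ (s.map f).prod := by
  induction s using Multiset.induction_on with
  | empty => simp
  | cons a t ih =>
    simp only [Multiset.map_cons, Multiset.prod_cons, Multiset.card_cons, pow_succ]
    rw [mul_comm (c ^ Multiset.card t) c]
    exact mul_le_mul (h a (Multiset.mem_cons_self a t))
      (ih (fun r hr => h r (Multiset.mem_cons_of_mem hr)))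
      (pow_nonneg hc _) ((hc.trans (h a (Multiset.mem_cons_self a t))))

/-- Key one-variable lemma. -/
lemma key1 {p : Polynomial ℂ} (hp : p.Monic) (hn : 1 < p.natDegree) (y : ℂ) :
    ∃ y' : ℂ, (derivative p).eval y' = 0 ∧
      ‖y - y'‖ ^ (p.natDegree - 1) * (p.natDegree : ℝ) ≤ ‖(derivative p).eval y‖ ∧
      ‖p.eval y - p.eval y'‖ ≤
        2 ^ (p.natDegree - 1) * ‖(derivative p).eval y‖ * ‖y - y'‖ := by
  set n := p.natDegree with hn_def
  set m := n - 1 with hm_def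
  set q := derivative p with hq_def
  have hcoeff : q.coeff m = (n : ℂ) := by
    rw [hq_def, coeff_derivative]
    have hm1 : m + 1 = n := Nat.succ_pred_eq_of_pos (Nat.zero_lt_one.trans hn)
    rw [hm1, hp.coeff_natDegree, one_mul]
    exact_mod_cast congrArg (fun k : ℕ => (k:ℂ)) hm1
  have hnne : (n : ℂ) ≠ 0 := by
    simp only [Ne, Nat.cast_eq_zero]; omega
  have hqne : q ≠ 0 := fun h => hnne (by rw [← hcoeff, h, coeff_zero])
  have hqdeg : q.natDegree = m := by
    refine le_antisymm (natDegree_derivative_le p) (le_natDegree_of_ne_zero ?_)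
    rw [hcoeff]; exact hnne
  have hqlead : q.leadingCoeff = (n : ℂ) := by
    rw [leadingCoeff, hqdeg, hcoeff]
  have hcard0 : Multiset.card q.roots = q.natDegree :=
    splits_iff_card_roots.mp (IsAlgClosed.splits q)
  have hcard : Multiset.card q.roots = m := by rw [hcard0, hqdeg]
  have hfac : ∀ t : ℂ, ‖q.eval t‖ = (n : ℝ) * ((q.roots.map fun r => ‖t - r‖)).prod := by
    intro t
    conv_lhs => rw [← C_leadingCoeff_mul_prod_multiset_X_sub_C hcard0]
    rw [eval_mul, eval_C, norm_mul, hqlead]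
    rw [eval_multiset_prod]
    rw [mnorm_prod, Multiset.map_map, Multiset.map_map]
    simp [Complex.norm_natCast]
  -- nearest root
  have hne : q.roots ≠ 0 := by
    intro h; rw [h] at hcard; simp at hcard; omega
  obtain ⟨r0, hr0⟩ := Multiset.exists_mem_of_ne_zero hne
  obtain ⟨y', hy'mem, hy'min⟩ := q.roots.toFinset.exists_min_image (fun r => ‖y - r‖)
    ⟨r0, Multiset.mem_toFinset.mpr hr0⟩
  have hy'root : q.eval y' = 0 :=
    (mem_roots'.mp (Multiset.mem_toFinset.mp hy'mem)).2
  have hmin : ∀ r ∈ q.roots, ‖y - y'‖ ≤ ‖y - r‖ := fun r hr =>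
    hy'min r (Multiset.mem_toFinset.mpr hr)
  refine ⟨y', hy'root, ?_, ?_⟩
  · -- lower bound
    rw [hfac y, mul_comm]
    have := mpow_le_prod (norm_nonneg (y - y')) hmin
    rw [hcard] at this
    exact mul_le_mul_of_nonneg_left this (by positivity)
  · -- MVT bound
    have hsegbound : ∀ t ∈ segment ℝ y y', ‖q.eval t‖ ≤ 2 ^ m * ‖q.eval y‖ := by
      intro t ht
      have hty : ‖t - y‖ ≤ ‖y - y'‖ := by
        obtain ⟨a, b, ha, hb, hab, rfl⟩ := ht
        have : a • y + b • y' - y = b • (y' - y) := by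
          have : a = 1 - b := by linarith
          rw [this]; module
        rw [this, norm_smul, Real.norm_eq_abs, abs_of_nonneg hb, norm_sub_rev y' y]
        exact mul_le_of_le_one_left (norm_nonneg _) (by linarith)
      rw [hfac t, hfac y]
      have hle : ((q.roots.map fun r => ‖t - r‖)).prod ≤
          ((q.roots.map fun r => 2 * ‖y - r‖)).prod := by
        refine mprod_le (fun r _ => norm_nonneg _) (fun r hr => ?_)
        calc ‖t - r‖ ≤ ‖t - y‖ + ‖y - r‖ := by
              simpa using norm_sub_le_norm_sub_add_norm_sub t y r
          _ ≤ ‖y - r‖ + ‖y - r‖ := by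
              have := hty.trans (hmin r hr); linarith
          _ = 2 * ‖y - r‖ := by ring
      have h2 : ((q.roots.map fun r => 2 * ‖y - r‖)).prod
          = 2 ^ m * ((q.roots.map fun r => ‖y - r‖)).prod := by
        rw [show (fun r : ℂ => 2 * ‖y - r‖) = (fun r : ℂ => (fun _ => (2:ℝ)) r * (fun r => ‖y - r‖) r) from rfl,
          Multiset.prod_map_mul]
        congr 1
        rw [Multiset.map_const', Multiset.prod_replicate, hcard]
      calc (n:ℝ) * ((q.roots.map fun r => ‖t - r‖)).prod
          ≤ (n:ℝ) * (2 ^ m * ((q.roots.map fun r => ‖y - r‖)).prod) := by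
            rw [← h2]; exact mul_le_mul_of_nonneg_left hle (by positivity)
        _ = 2 ^ m * ((n:ℝ) * ((q.roots.map fun r => ‖y - r‖)).prod) := by ring
    have := Convex.norm_image_sub_le_of_norm_hasDerivWithin_le
      (f := fun t => p.eval t) (f' := fun t => q.eval t) (s := segment ℝ y y')
      (fun t _ => (Polynomial.hasDerivAt p t).hasDerivWithinAt) hsegbound
      (convex_segment y y') (right_mem_segment ℝ y y') (left_mem_segment ℝ y y')
    simpa [norm_sub_rev] using this

noncomputable def pval' (f : Polynomial (Polynomial ℂ)) (x y : ℂ) : ℂ :=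
  (f.map (evalRingHom x)).eval y

lemma pval'_derivative (f : Polynomial (Polynomial ℂ)) (x y : ℂ) :
    pval' (derivative f) x y = ((f.map (evalRingHom x)).derivative).eval y := by
  rw [pval', derivative_map]

/-- projection to the set `f'_y = 0`. -/
lemma proj (f : Polynomial (Polynomial ℂ)) (hf : f.Monic) (hdeg : 1 < f.natDegree)
    (x y : ℂ) :
    ∃ y' : ℂ, pval' (derivative f) x y' = 0 ∧
      ‖y - y'‖ ^ (f.natDegree - 1) * (f.natDegree : ℝ) ≤ ‖pval' (derivative f) x y‖ ∧
      ‖pval' f x y - pval' f x y'‖ ≤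
        2 ^ (f.natDegree - 1) * ‖pval' (derivative f) x y‖ * ‖y - y'‖ := by
  have hmono : (f.map (evalRingHom x)).Monic := hf.map _
  have hdeg' : (f.map (evalRingHom x)).natDegree = f.natDegree := hf.natDegree_map _
  obtain ⟨y', h1, h2, h3⟩ := key1 hmono (by rw [hdeg']; exact hdeg) y
  rw [hdeg'] at h2 h3
  refine ⟨y', ?_, ?_, ?_⟩
  · rw [pval'_derivative]; exact h1
  · rw [pval'_derivative]; exact h2
  · rw [pval'_derivative]; exact h3

lemma root_bound {q : Polynomial ℂ} {c : ℝ} (hq : q.natDegree ≠ 0)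
    (hc : ∀ i < q.natDegree, ‖q.coeff i‖ ≤ c) {y : ℂ} (hy : q.eval y = 0) :
    ‖y‖ ≤ max 1 ((q.natDegree : ℝ) * c / ‖q.leadingCoeff‖) := by
  set d := q.natDegree with hd
  have hqne : q ≠ 0 := fun h => hq (by rw [hd, h]; simp)
  have hlc : (0:ℝ) < ‖q.leadingCoeff‖ := by
    rw [norm_pos_iff]; exact leadingCoeff_ne_zero.mpr hqne
  have hc0 : 0 ≤ c := le_trans (norm_nonneg _) (hc 0 (by omega))
  by_contra hcon
  push_neg at hcon
  rw [max_lt_iff] at hcon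
  obtain ⟨hy1, hy2⟩ := hcon
  have hy0 : 0 < ‖y‖ := lt_trans one_pos hy1
  have hdc : (d:ℝ) * c < ‖q.leadingCoeff‖ * ‖y‖ := by
    rw [div_lt_iff₀ hlc] at hy2; linarith [hy2]
  have heval : (0:ℂ) = ∑ i ∈ Finset.range d, q.coeff i * y ^ i + q.leadingCoeff * y ^ d := by
    rw [← hy, eval_eq_sum_range, Finset.sum_range_succ]; rfl
  have hnorm : ‖q.leadingCoeff‖ * ‖y‖ ^ d ≤ ∑ i ∈ Finset.range d, ‖q.coeff i‖ * ‖y‖ ^ i := by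
    have : q.leadingCoeff * y ^ d = -(∑ i ∈ Finset.range d, q.coeff i * y ^ i) := by
      rw [eq_neg_iff_add_eq_zero]; rw [add_comm] at heval; exact heval.symm
    calc ‖q.leadingCoeff‖ * ‖y‖ ^ d = ‖q.leadingCoeff * y ^ d‖ := by
          rw [norm_mul, norm_pow]
      _ = ‖∑ i ∈ Finset.range d, q.coeff i * y ^ i‖ := by rw [this, norm_neg]
      _ ≤ ∑ i ∈ Finset.range d, ‖q.coeff i * y ^ i‖ := norm_sum_le _ _
      _ = ∑ i ∈ Finset.range d, ‖q.coeff i‖ * ‖y‖ ^ i := by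
          simp [norm_mul, norm_pow]
  have hub : ∑ i ∈ Finset.range d, ‖q.coeff i‖ * ‖y‖ ^ i ≤ (d:ℝ) * (c * ‖y‖ ^ (d-1)) := by
    calc ∑ i ∈ Finset.range d, ‖q.coeff i‖ * ‖y‖ ^ i
        ≤ ∑ _i ∈ Finset.range d, c * ‖y‖ ^ (d-1) := by
          refine Finset.sum_le_sum fun i hi => ?_
          have hi' := Finset.mem_range.mp hi
          exact mul_le_mul (hc i hi')
            (pow_le_pow_right₀ hy1.le (by omega)) (by positivity) hc0
      _ = (d:ℝ) * (c * ‖y‖ ^ (d-1)) := by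
          rw [Finset.sum_const, Finset.card_range, nsmul_eq_mul]
  have hlow : ‖q.leadingCoeff‖ * ‖y‖ * ‖y‖ ^ (d-1) ≤ (d:ℝ) * c * ‖y‖ ^ (d-1) := by
    have h1 : ‖q.leadingCoeff‖ * ‖y‖ ^ d = ‖q.leadingCoeff‖ * ‖y‖ * ‖y‖ ^ (d-1) := by
      rw [mul_assoc, ← pow_succ']
      congr 2
      omega
    calc ‖q.leadingCoeff‖ * ‖y‖ * ‖y‖ ^ (d-1) = ‖q.leadingCoeff‖ * ‖y‖ ^ d := h1.symm
      _ ≤ ∑ i ∈ Finset.range d, ‖q.coeff i‖ * ‖y‖ ^ i := hnorm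
      _ ≤ (d:ℝ) * (c * ‖y‖ ^ (d-1)) := hub
      _ = (d:ℝ) * c * ‖y‖ ^ (d-1) := by ring
  have hpow : (0:ℝ) < ‖y‖ ^ (d-1) := by positivity
  have := (mul_le_mul_iff_of_pos_right hpow).mp hlow
  linarith

lemma deriv_lead {p : Polynomial ℂ} (hp : p.Monic) (hn : 1 < p.natDegree) :
    (derivative p).natDegree = p.natDegree - 1 ∧
      (derivative p).leadingCoeff = (p.natDegree : ℂ) := by
  set n := p.natDegree with hn_def
  set m := n - 1 with hm_def
  have hcoeff : (derivative p).coeff m = (n : ℂ) := by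
    rw [coeff_derivative]
    have hm1 : m + 1 = n := Nat.succ_pred_eq_of_pos (Nat.zero_lt_one.trans hn)
    rw [hm1, hp.coeff_natDegree, one_mul]
    exact_mod_cast congrArg (fun k : ℕ => (k:ℂ)) hm1
  have hnne : (n : ℂ) ≠ 0 := by
    simp only [Ne, Nat.cast_eq_zero]; omega
  have hdeg : (derivative p).natDegree = m := by
    refine le_antisymm (natDegree_derivative_le p) (le_natDegree_of_ne_zero ?_)
    rw [hcoeff]; exact hnne
  exact ⟨hdeg, by rw [leadingCoeff, hdeg, hcoeff]⟩

lemma xbound (f : Polynomial (Polynomial ℂ)) (hf : f.Monic) (hdeg : 1 < f.natDegree) (L : ℝ) :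
    ∃ K : ℝ, L ≤ K ∧ 1 ≤ K ∧
      ∀ x y' : ℂ, pval' (derivative f) x y' = 0 → ‖x‖ ≤ L → ‖y'‖ ≤ K := by
  set n := f.natDegree with hn_def
  set m := n - 1 with hm_def
  set g : ℂ → ℝ := fun x => ∑ i ∈ Finset.range m, ‖((derivative f).coeff i).eval x‖
    with hg_def
  have hgc : Continuous g := by
    apply continuous_finset_sum
    intro i _
    exact (Polynomial.continuous _).norm
  obtain ⟨C, hC⟩ := (isCompact_closedBall (0:ℂ) (max L 0)).exists_bound_of_continuousOn
    hgc.continuousOn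
  refine ⟨max (max L 1) (max 1 ((m:ℝ) * max C 0 / n)), le_trans (le_max_left L 1) (le_max_left _ _),
    le_trans (le_max_right L 1) (le_max_left _ _), fun x y' hroot hxL => ?_⟩
  have hxmem : x ∈ Metric.closedBall (0:ℂ) (max L 0) := by
    rw [Metric.mem_closedBall, dist_zero_right]
    exact le_trans hxL (le_max_left _ _)
  have hCx := hC x hxmem
  have hgx : g x ≤ C := le_trans (Real.le_norm_self _) hCx
  set p := f.map (evalRingHom x) with hp_def
  have hpm : p.Monic := hf.map _
  have hpd : p.natDegree = n := hf.natDegree_map _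
  obtain ⟨hqdeg, hqlead⟩ := deriv_lead hpm (by rw [hpd]; exact hdeg)
  rw [hpd] at hqdeg hqlead
  have hy'root : (derivative p).eval y' = 0 := by
    rw [pval'_derivative] at hroot; exact hroot
  have hcb : ∀ i < (derivative p).natDegree, ‖(derivative p).coeff i‖ ≤ max C 0 := by
    intro i hi
    rw [hqdeg] at hi
    have : (derivative p).coeff i = ((derivative f).coeff i).eval x := by
      rw [hp_def, derivative_map, coeff_map, evalRingHom]; rfl
    rw [this]
    refine le_trans ?_ (le_max_left C 0)
    refine le_trans ?_ hgx
    exact Finset.single_le_sum (f := fun i => ‖((derivative f).coeff i).eval x‖)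
      (fun j _ => norm_nonneg _) (Finset.mem_range.mpr hi)
  have := root_bound (by rw [hqdeg]; omega) hcb hy'root
  rw [hqdeg, hqlead] at this
  have hnn : ‖((n:ℕ) : ℂ)‖ = (n:ℝ) := by simp
  rw [hnn] at this
  exact le_trans this (le_max_right (max L 1) _)

def NuSet {E F : Type*} [NormedAddCommGroup E] [NormedAddCommGroup F]
    (f : E → F) (S : Set E) : Set ℝ :=
  {ν : ℝ | ∃ A B : ℝ, 0 < A ∧ 0 < B ∧ ∀ z ∈ S, B < ‖z‖ → A * Real.rpow ‖z‖ ν ≤ ‖f z‖}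

lemma NuSet.dcl {E F : Type*} [NormedAddCommGroup E] [NormedAddCommGroup F]
    {f : E → F} {S : Set E} {ν ν' : ℝ} (h : ν ∈ NuSet f S) (hle : ν' ≤ ν) :
    ν' ∈ NuSet f S := by
  obtain ⟨A, B, hA, hB, hz⟩ := h
  refine ⟨A, max B 1, hA, lt_of_lt_of_le hB (le_max_left _ _), fun z hzS hzB => ?_⟩
  have h1 : 1 ≤ ‖z‖ := le_of_lt (lt_of_le_of_lt (le_max_right B 1) hzB)
  refine le_trans (mul_le_mul_of_nonneg_left ?_ hA.le)
    (hz z hzS (lt_of_le_of_lt (le_max_left B 1) hzB))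
  exact Real.rpow_le_rpow_of_exponent_le h1 hle

lemma prodnorm {x y y' : ℂ} (h : ‖y - y'‖ ≤ 1) :
    max ‖x‖ ‖y‖ - 1 ≤ max ‖x‖ ‖y'‖ ∧ max ‖x‖ ‖y'‖ ≤ max ‖x‖ ‖y‖ + 1 := by
  have h1 : ‖y‖ - 1 ≤ ‖y'‖ := by
    have := norm_sub_norm_le y y'
    linarith
  have h2 : ‖y'‖ ≤ ‖y‖ + 1 := by
    have := norm_sub_norm_le y' y
    have h' : ‖y' - y‖ ≤ 1 := by rwa [norm_sub_rev]
    linarith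
  constructor
  · rw [sub_le_iff_le_add]
    apply max_le
    · linarith [le_max_left ‖x‖ ‖y'‖]
    · linarith [le_max_right ‖x‖ ‖y'‖]
  · apply max_le
    · linarith [le_max_left ‖x‖ ‖y‖]
    · linarith [le_max_right ‖x‖ ‖y‖]

lemma smallDiffAux {a q nr : ℝ} {m : ℕ} (ha : 0 ≤ a) (h : a ^ m * nr ≤ q)
    (hq : q < 1) (hn2 : 2 ≤ nr) : a ≤ 1 := by
  by_contra hcon
  push_neg at hcon
  have h1 : 1 ≤ a ^ m := one_le_pow₀ hcon.le
  nlinarith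

lemma transfer1 {f : Polynomial (Polynomial ℂ)} (hf : f.Monic) (hdeg : 1 < f.natDegree)
    (lam0 : ℂ) {ν : ℝ} (hν0 : ν ≤ 0)
    (hν : ν ∈ NuSet (fun z : ℂ × ℂ => pval' f z.1 z.2 - lam0)
      {z : ℂ × ℂ | pval' (derivative f) z.1 z.2 = 0}) :
    ν ∈ NuSet (fun z : ℂ × ℂ => ((pval' f z.1 z.2 - lam0, pval' (derivative f) z.1 z.2) : ℂ × ℂ))
      Set.univ := by
  obtain ⟨A, B, hA, hB, h⟩ := hν
  set n := f.natDegree with hn_def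
  set m := n - 1 with hm_def
  have h2ν : (0:ℝ) < 2 ^ ν := Real.rpow_pos_of_pos two_pos ν
  have h2m : (0:ℝ) < 1 + 2 ^ m := by positivity
  refine ⟨min 1 (A * 2 ^ ν / (1 + 2 ^ m)), B + 2, by positivity, by linarith, ?_⟩
  rintro z - hzB
  have hz1 : (1:ℝ) ≤ ‖z‖ := by linarith
  set ε := ‖((pval' f z.1 z.2 - lam0, pval' (derivative f) z.1 z.2) : ℂ × ℂ)‖ with hε_def
  have hεeq : ε = max ‖pval' f z.1 z.2 - lam0‖ ‖pval' (derivative f) z.1 z.2‖ := rfl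
  rcases le_or_gt 1 ε with hε | hε
  · refine le_trans ?_ hε
    have hr1 : Real.rpow ‖z‖ ν ≤ 1 := Real.rpow_le_one_of_one_le_of_nonpos hz1 hν0
    have := mul_le_mul (min_le_left 1 (A * 2 ^ ν / (1 + 2 ^ m))) hr1
      (Real.rpow_nonneg (norm_nonneg z) ν) zero_le_one
    simpa using this
  · have hg1 : ‖pval' f z.1 z.2 - lam0‖ ≤ ε := by rw [hεeq]; exact le_max_left _ _
    have hg2 : ‖pval' (derivative f) z.1 z.2‖ ≤ ε := by rw [hεeq]; exact le_max_right _ _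
    obtain ⟨y', hroot, hpow, hmvt⟩ := proj f hf hdeg z.1 z.2
    have hn2 : (2:ℝ) ≤ (n:ℝ) := by exact_mod_cast hdeg
    have hyy' : ‖z.2 - y'‖ ≤ 1 :=
      smallDiffAux (norm_nonneg _) (le_trans hpow hg2) hε hn2
    set w : ℂ × ℂ := (z.1, y') with hw_def
    have hwSy : w ∈ {z : ℂ × ℂ | pval' (derivative f) z.1 z.2 = 0} := hroot
    have hzn : ‖z‖ = max ‖z.1‖ ‖z.2‖ := Prod.norm_def z
    have hwn : ‖w‖ = max ‖z.1‖ ‖y'‖ := Prod.norm_def w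
    obtain ⟨hpn1, hpn2⟩ := prodnorm (x := z.1) hyy'
    have hwge : ‖z‖ - 1 ≤ ‖w‖ := by rw [hzn, hwn]; exact hpn1
    have hwle : ‖w‖ ≤ ‖z‖ + 1 := by rw [hzn, hwn]; exact hpn2
    have hwB : B < ‖w‖ := by linarith
    have hw0 : 0 < ‖w‖ := by linarith
    have happ := h w hwSy hwB
    have hg1w : ‖pval' f w.1 w.2 - lam0‖ ≤ (1 + 2 ^ m) * ε := by
      have hsplit : pval' f w.1 w.2 - lam0 =
          (pval' f z.1 z.2 - lam0) - (pval' f z.1 z.2 - pval' f z.1 y') := by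
        simp [hw_def]
      rw [hsplit]
      refine le_trans (norm_sub_le _ _) ?_
      have hmvt2 : ‖pval' f z.1 z.2 - pval' f z.1 y'‖ ≤ 2 ^ m * ε * 1 := by
        refine le_trans hmvt ?_
        have := mul_le_mul (mul_le_mul_of_nonneg_left hg2 (by positivity : (0:ℝ) ≤ 2 ^ m))
          hyy' (norm_nonneg _) (by positivity)
        exact this
      have hε0 : 0 ≤ ε := le_trans (norm_nonneg _) hg1
      nlinarith
    have hwle2 : ‖w‖ ≤ 2 * ‖z‖ := by linarith
    have hrple : Real.rpow (2 * ‖z‖) ν ≤ Real.rpow ‖w‖ ν :=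
      Real.rpow_le_rpow_of_nonpos hw0 hwle2 hν0
    have hsplit2 : Real.rpow (2 * ‖z‖) ν = 2 ^ ν * Real.rpow ‖z‖ ν :=
      Real.mul_rpow (by norm_num) (norm_nonneg z)
    have key : A * 2 ^ ν * Real.rpow ‖z‖ ν ≤ (1 + 2 ^ m) * ε := by
      calc A * 2 ^ ν * Real.rpow ‖z‖ ν = A * Real.rpow (2 * ‖z‖) ν := by
            rw [hsplit2]; ring
        _ ≤ A * Real.rpow ‖w‖ ν := mul_le_mul_of_nonneg_left hrple hA.le
        _ ≤ ‖pval' f w.1 w.2 - lam0‖ := happ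
        _ ≤ (1 + 2 ^ m) * ε := hg1w
    have hrpz : 0 ≤ Real.rpow ‖z‖ ν := Real.rpow_nonneg (norm_nonneg z) ν
    calc min 1 (A * 2 ^ ν / (1 + 2 ^ m)) * Real.rpow ‖z‖ ν
        ≤ (A * 2 ^ ν / (1 + 2 ^ m)) * Real.rpow ‖z‖ ν :=
          mul_le_mul_of_nonneg_right (min_le_right _ _) hrpz
      _ = (A * 2 ^ ν * Real.rpow ‖z‖ ν) / (1 + 2 ^ m) := by ring
      _ ≤ ((1 + 2 ^ m) * ε) / (1 + 2 ^ m) := by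
          exact (div_le_div_iff_of_pos_right h2m).mpr key
      _ = ε := by field_simp

lemma easy1 {f : Polynomial (Polynomial ℂ)} (lam0 : ℂ) {ν : ℝ}
    (hν : ν ∈ NuSet
      (fun z : ℂ × ℂ => ((pval' f z.1 z.2 - lam0, pval' (derivative f) z.1 z.2) : ℂ × ℂ))
      Set.univ) :
    ν ∈ NuSet (fun z : ℂ × ℂ => pval' f z.1 z.2 - lam0)
      {z : ℂ × ℂ | pval' (derivative f) z.1 z.2 = 0} := by
  obtain ⟨A, B, hA, hB, h⟩ := hν
  refine ⟨A, B, hA, hB, fun z hz hzB => ?_⟩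
  have := h z trivial hzB
  have heq : ‖((pval' f z.1 z.2 - lam0, pval' (derivative f) z.1 z.2) : ℂ × ℂ)‖
      = ‖pval' f z.1 z.2 - lam0‖ := by
    rw [Prod.norm_def]
    simp only [hz.out, norm_zero]
    exact max_eq_left (norm_nonneg _)
  rwa [heq] at this

lemma transfer2 {f : Polynomial (Polynomial ℂ)} (hf : f.Monic) (hdeg : 1 < f.natDegree)
    (lam0 : ℂ) {ν ν' : ℝ} (hν0 : ν ≤ 0)
    (hν'eq : ν' = ν * ((f.natDegree - 1 : ℕ) : ℝ) / (f.natDegree : ℝ))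
    (hν : ν ∈ NuSet (fun z : ℂ × ℂ => pval' f z.1 z.2 - lam0)
      {z : ℂ × ℂ | pval' (derivative f) z.1 z.2 = 0}) :
    ν' ∈ NuSet (fun z : ℂ × ℂ => pval' (derivative f) z.1 z.2)
      {z : ℂ × ℂ | pval' f z.1 z.2 = lam0} := by
  obtain ⟨A, B, hA, hB, h⟩ := hν
  set n := f.natDegree with hn_def
  set m := n - 1 with hm_def
  have hn0 : (0:ℝ) < (n:ℝ) := by
    have : 0 < n := by omega
    exact_mod_cast this
  have hmr : (0:ℝ) ≤ (m:ℝ) := by positivity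
  have hν'0 : ν' ≤ 0 := by
    rw [hν'eq]
    apply div_nonpos_of_nonpos_of_nonneg _ hn0.le
    exact mul_nonpos_of_nonpos_of_nonneg hν0 hmr
  have h2ν : (0:ℝ) < 2 ^ ν := Real.rpow_pos_of_pos two_pos ν
  set c₁ : ℝ := (A * 2 ^ ν) ^ m / 2 ^ (m * m) with hc₁_def
  have hc₁ : 0 < c₁ := by positivity
  set A₃ : ℝ := c₁ ^ ((n:ℝ)⁻¹) with hA₃_def
  have hA₃ : 0 < A₃ := Real.rpow_pos_of_pos hc₁ _
  refine ⟨min 1 A₃, B + 2, by positivity, by linarith, ?_⟩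
  rintro w hw hwB
  have hw1 : (1:ℝ) ≤ ‖w‖ := by linarith
  set q := ‖pval' (derivative f) w.1 w.2‖ with hq_def
  have hq0 : 0 ≤ q := norm_nonneg _
  rcases le_or_gt 1 q with hq | hq
  · refine le_trans ?_ hq
    have hr1 : Real.rpow ‖w‖ ν' ≤ 1 := Real.rpow_le_one_of_one_le_of_nonpos hw1 hν'0
    have := mul_le_mul (min_le_left 1 A₃) hr1 (Real.rpow_nonneg (norm_nonneg w) ν') zero_le_one
    simpa using this
  · obtain ⟨y', hroot, hpow, hmvt⟩ := proj f hf hdeg w.1 w.2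
    have hn2 : (2:ℝ) ≤ (n:ℝ) := by exact_mod_cast hdeg
    have hyy' : ‖w.2 - y'‖ ≤ 1 :=
      smallDiffAux (norm_nonneg _) hpow hq hn2
    set w' : ℂ × ℂ := (w.1, y') with hw'_def
    have hw'Sy : w' ∈ {z : ℂ × ℂ | pval' (derivative f) z.1 z.2 = 0} := hroot
    have hwn : ‖w‖ = max ‖w.1‖ ‖w.2‖ := Prod.norm_def w
    have hw'n : ‖w'‖ = max ‖w.1‖ ‖y'‖ := Prod.norm_def w'
    obtain ⟨hpn1, hpn2⟩ := prodnorm (x := w.1) hyy'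
    have hwge : ‖w‖ - 1 ≤ ‖w'‖ := by rw [hwn, hw'n]; exact hpn1
    have hwle : ‖w'‖ ≤ ‖w‖ + 1 := by rw [hwn, hw'n]; exact hpn2
    have hw'B : B < ‖w'‖ := by linarith
    have hw'0 : 0 < ‖w'‖ := by linarith
    have happ := h w' hw'Sy hw'B
    have hg1w : ‖pval' f w'.1 w'.2 - lam0‖ ≤ 2 ^ m * q * ‖w.2 - y'‖ := by
      have hfib : pval' f w.1 w.2 = lam0 := hw.out
      have : pval' f w'.1 w'.2 - lam0 = -(pval' f w.1 w.2 - pval' f w.1 y') := by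
        rw [hw'_def]; simp [hfib]
      rw [this, norm_neg]
      exact hmvt
    have hwle2 : ‖w'‖ ≤ 2 * ‖w‖ := by linarith
    have hrple : Real.rpow (2 * ‖w‖) ν ≤ Real.rpow ‖w'‖ ν :=
      Real.rpow_le_rpow_of_nonpos hw'0 hwle2 hν0
    have hsplit2 : Real.rpow (2 * ‖w‖) ν = 2 ^ ν * Real.rpow ‖w‖ ν :=
      Real.mul_rpow (by norm_num) (norm_nonneg w)
    have key : A * 2 ^ ν * Real.rpow ‖w‖ ν ≤ 2 ^ m * q * ‖w.2 - y'‖ := by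
      calc A * 2 ^ ν * Real.rpow ‖w‖ ν = A * Real.rpow (2 * ‖w‖) ν := by
            rw [hsplit2]; ring
        _ ≤ A * Real.rpow ‖w'‖ ν := mul_le_mul_of_nonneg_left hrple hA.le
        _ ≤ ‖pval' f w'.1 w'.2 - lam0‖ := happ
        _ ≤ 2 ^ m * q * ‖w.2 - y'‖ := hg1w
    -- raise to the m-th power
    have hlhs0 : 0 ≤ A * 2 ^ ν * Real.rpow ‖w‖ ν :=
      mul_nonneg (mul_nonneg hA.le h2ν.le) (Real.rpow_nonneg (norm_nonneg w) ν)
    have hkeym : (A * 2 ^ ν * Real.rpow ‖w‖ ν) ^ m ≤ (2 ^ m * q * ‖w.2 - y'‖) ^ m :=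
      pow_le_pow_left₀ hlhs0 key m
    have hdiv : ‖w.2 - y'‖ ^ m ≤ q / n := by
      rw [le_div_iff₀ hn0]
      exact hpow
    have hrhs : (2 ^ m * q * ‖w.2 - y'‖) ^ m ≤ 2 ^ (m*m) * q ^ m * (q / n) := by
      rw [mul_pow, mul_pow, ← pow_mul]
      refine mul_le_mul_of_nonneg_left hdiv ?_
      exact mul_nonneg (by positivity) (pow_nonneg hq0 m)
    have hqn : 2 ^ (m*m) * q ^ m * (q / n) ≤ 2 ^ (m*m) * q ^ n := by
      have h1 : q / n ≤ q := by
        apply div_le_self hq0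
        linarith
      have h2 : q ^ m * (q / n) ≤ q ^ m * q :=
        mul_le_mul_of_nonneg_left h1 (by positivity)
      have h3 : q ^ m * q = q ^ n := by
        rw [← pow_succ]
        congr 1
        omega
      calc 2 ^ (m*m) * q ^ m * (q / n) = 2 ^ (m*m) * (q ^ m * (q / n)) := by ring
        _ ≤ 2 ^ (m*m) * (q ^ m * q) := by
            exact mul_le_mul_of_nonneg_left h2 (by positivity)
        _ = 2 ^ (m*m) * q ^ n := by rw [h3]
    have hlhsm : (A * 2 ^ ν * Real.rpow ‖w‖ ν) ^ m
        = (A * 2 ^ ν) ^ m * Real.rpow ‖w‖ (ν * m) := by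
      show (A * 2 ^ ν * ‖w‖ ^ ν) ^ m = (A * 2 ^ ν) ^ m * ‖w‖ ^ (ν * (m:ℝ))
      rw [mul_pow, ← Real.rpow_natCast (‖w‖ ^ ν) m, ← Real.rpow_mul (norm_nonneg w)]
    have hmain : c₁ * Real.rpow ‖w‖ (ν * m) ≤ q ^ n := by
      rw [hc₁_def, div_mul_eq_mul_div, div_le_iff₀ (by positivity : (0:ℝ) < 2 ^ (m*m))]
      calc (A * 2 ^ ν) ^ m * Real.rpow ‖w‖ (ν * m)
          = (A * 2 ^ ν * Real.rpow ‖w‖ ν) ^ m := hlhsm.symm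
        _ ≤ 2 ^ (m*m) * q ^ n := le_trans hkeym (le_trans hrhs hqn)
        _ = q ^ n * 2 ^ (m*m) := by ring
    -- take n-th root
    have hfin : Real.rpow (c₁ * Real.rpow ‖w‖ (ν * m)) ((n:ℝ)⁻¹)
        ≤ Real.rpow (q ^ n) ((n:ℝ)⁻¹) :=
      Real.rpow_le_rpow (mul_nonneg hc₁.le (Real.rpow_nonneg (norm_nonneg w) _))
        hmain (by positivity)
    have hrhsq : Real.rpow (q ^ n) ((n:ℝ)⁻¹) = q := by
      show (q ^ n) ^ ((n:ℝ)⁻¹) = q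
      rw [← Real.rpow_natCast q n, ← Real.rpow_mul hq0, mul_inv_cancel₀ hn0.ne', Real.rpow_one]
    have hlhsq : Real.rpow (c₁ * Real.rpow ‖w‖ (ν * m)) ((n:ℝ)⁻¹)
        = A₃ * Real.rpow ‖w‖ ν' := by
      show (c₁ * ‖w‖ ^ (ν * (m:ℝ))) ^ ((n:ℝ)⁻¹) = A₃ * ‖w‖ ^ ν'
      rw [Real.mul_rpow hc₁.le (Real.rpow_nonneg (norm_nonneg w) _),
        ← Real.rpow_mul (norm_nonneg w), hν'eq, div_eq_mul_inv]
    rw [hrhsq, hlhsq] at hfin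
    refine le_trans (mul_le_mul_of_nonneg_right (min_le_right 1 A₃)
      (Real.rpow_nonneg (norm_nonneg w) ν')) hfin

def sylvester' {R : Type*} [CommRing R] (p q : Polynomial R) (m n : ℕ) :
    Matrix (Fin (n + m)) (Fin (n + m)) R :=
  Matrix.of fun i j =>
    Fin.addCases
      (fun i₁ : Fin n => if (i₁ : ℕ) ≤ (j : ℕ) then p.coeff ((j : ℕ) - i₁) else 0)
      (fun i₂ : Fin m => if (i₂ : ℕ) ≤ (j : ℕ) then q.coeff ((j : ℕ) - i₂) else 0) i

noncomputable def resultant' {R : Type*} [CommRing R] (p q : Polynomial R) : R :=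
  (sylvester' p q p.natDegree q.natDegree).det

lemma resultant'_map {R S' : Type*} [CommRing R] [CommRing S'] (φ : R →+* S')
    {p q : Polynomial R}
    (hp : (p.map φ).natDegree = p.natDegree) (hq : (q.map φ).natDegree = q.natDegree) :
    φ (resultant' p q) = resultant' (p.map φ) (q.map φ) := by
  unfold resultant'
  rw [hp, hq, RingHom.map_det]
  congr 1
  ext i j
  unfold sylvester'
  induction i using Fin.addCases with
  | left i₁ =>
    simp only [RingHom.mapMatrix_apply, Matrix.map_apply, Matrix.of_apply, Fin.addCases_left]
    rw [apply_ite φ, map_zero, coeff_map]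
  | right i₂ =>
    simp only [RingHom.mapMatrix_apply, Matrix.map_apply, Matrix.of_apply, Fin.addCases_right]
    rw [apply_ite φ, map_zero, coeff_map]

lemma shift_sum (c : ℕ → ℂ) (d i L : ℕ) (hd : ∀ t, d < t → c t = 0) (hiL : d + i < L)
    (y₀ : ℂ) :
    ∑ j ∈ Finset.range L, (if i ≤ j then c (j - i) else 0) * y₀ ^ j
      = y₀ ^ i * ∑ t ∈ Finset.range (d+1), c t * y₀ ^ t := by
  simp only [ite_mul, zero_mul]
  rw [← Finset.sum_filter]
  have hfil : (Finset.range L).filter (fun j => i ≤ j) = Finset.Ico i L := by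
    ext j
    simp only [Finset.mem_filter, Finset.mem_range, Finset.mem_Ico]
    omega
  rw [hfil, Finset.sum_Ico_eq_sum_range]
  have hstep : ∀ k, c (i + k - i) * y₀ ^ (i + k) = y₀ ^ i * (c k * y₀ ^ k) := by
    intro k
    rw [Nat.add_sub_cancel_left, pow_add]
    ring
  rw [Finset.sum_congr rfl (fun k _ => hstep k), ← Finset.mul_sum]
  congr 1
  symm
  apply Finset.sum_subset
  · apply Finset.range_subset_range.mpr
    omega
  · intro t _ ht
    have : d < t := by
      simp only [Finset.mem_range, not_lt] at ht
      omega
    rw [hd t this, zero_mul]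

lemma resultant'_eq_zero_of_common_root {p q : Polynomial ℂ} (y₀ : ℂ)
    (hp : p.eval y₀ = 0) (hq : q.eval y₀ = 0) (hpos : 0 < p.natDegree) :
    resultant' p q = 0 := by
  set m := p.natDegree with hm_def
  set k := q.natDegree with hk_def
  apply Matrix.exists_mulVec_eq_zero_iff.mp
  refine ⟨fun j => y₀ ^ (j : ℕ), ?_, ?_⟩
  · intro h
    have h0 : (0:ℕ) < k + m := by omega
    have := congrFun h ⟨0, h0⟩
    simp at this
  · funext i
    have hrow : ((sylvester' p q m k).mulVec fun j => y₀ ^ (j:ℕ)) i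
        = ∑ j : Fin (k+m), sylvester' p q m k i j * y₀ ^ (j:ℕ) := by
      simp [Matrix.mulVec, dotProduct]
    rw [hrow]
    induction i using Fin.addCases with
    | left i₁ =>
      have hent : ∀ j : Fin (k+m), sylvester' p q m k (Fin.castAdd m i₁) j
          = if (i₁:ℕ) ≤ (j:ℕ) then p.coeff ((j:ℕ) - i₁) else 0 := by
        intro j
        unfold sylvester'
        simp [Fin.addCases_left]
      rw [Finset.sum_congr rfl (fun j _ => by rw [hent j])]
      have := Fin.sum_univ_eq_sum_range
        (fun j => (if (i₁:ℕ) ≤ j then p.coeff (j - i₁) else 0) * y₀ ^ j) (k+m)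
      rw [this, shift_sum p.coeff m i₁ (k+m)
        (fun t ht => coeff_eq_zero_of_natDegree_lt ht) (by omega) y₀]
      have heval : p.eval y₀ = ∑ t ∈ Finset.range (m+1), p.coeff t * y₀ ^ t :=
        eval_eq_sum_range y₀
      rw [← heval, hp, mul_zero]
      rfl
    | right i₂ =>
      have hent : ∀ j : Fin (k+m), sylvester' p q m k (Fin.natAdd k i₂) j
          = if (i₂:ℕ) ≤ (j:ℕ) then q.coeff ((j:ℕ) - i₂) else 0 := by
        intro j
        unfold sylvester'
        simp [Fin.addCases_right]
      rw [Finset.sum_congr rfl (fun j _ => by rw [hent j])]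
      have := Fin.sum_univ_eq_sum_range
        (fun j => (if (i₂:ℕ) ≤ j then q.coeff (j - i₂) else 0) * y₀ ^ j) (k+m)
      rw [this, shift_sum q.coeff k i₂ (k+m)
        (fun t ht => coeff_eq_zero_of_natDegree_lt ht) (by omega) y₀]
      have heval : q.eval y₀ = ∑ t ∈ Finset.range (k+1), q.coeff t * y₀ ^ t :=
        eval_eq_sum_range y₀
      rw [← heval, hq, mul_zero]
      rfl

lemma deriv_lead' {R : Type*} [CommRing R] [CharZero R] {p : Polynomial R} (hp : p.Monic)
    (hn : 1 < p.natDegree) :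
    (derivative p).natDegree = p.natDegree - 1 ∧
      (derivative p).leadingCoeff = (p.natDegree : R) := by
  set n := p.natDegree with hn_def
  set m := n - 1 with hm_def
  have hcoeff : (derivative p).coeff m = (n : R) := by
    rw [coeff_derivative]
    have hm1 : m + 1 = n := Nat.succ_pred_eq_of_pos (Nat.zero_lt_one.trans hn)
    rw [hm1, hp.coeff_natDegree, one_mul]
    exact_mod_cast congrArg (fun k : ℕ => (k:R)) hm1
  have hnne : (n : R) ≠ 0 := by
    simp only [Ne, Nat.cast_eq_zero]; omega
  have hdeg : (derivative p).natDegree = m := by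
    refine le_antisymm (natDegree_derivative_le p) (le_natDegree_of_ne_zero ?_)
    rw [hcoeff]; exact hnne
  exact ⟨hdeg, by rw [leadingCoeff, hdeg, hcoeff]⟩

noncomputable def Rres' (f : Polynomial (Polynomial ℂ)) : Polynomial (Polynomial ℂ) :=
  let F : Polynomial (Polynomial (Polynomial ℂ)) := f.map (mapRingHom C)
  resultant' (F - C (C X)) (derivative F)

lemma Rres'_vanish (f : Polynomial (Polynomial ℂ)) (hf : f.Monic) (hdeg : 1 < f.natDegree)
    (x μ y' : ℂ) (h1 : pval' f x y' = μ) (h2 : pval' (derivative f) x y' = 0) :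
    ((Rres' f).map (evalRingHom μ)).eval x = 0 := by
  set ev : Polynomial (Polynomial ℂ) →+* ℂ :=
    (evalRingHom x).comp (mapRingHom (evalRingHom μ)) with hev_def
  set F : Polynomial (Polynomial (Polynomial ℂ)) := f.map (mapRingHom C) with hF_def
  have hFm : F.Monic := hf.map _
  have hFdeg : F.natDegree = f.natDegree := hf.natDegree_map _
  set fx : Polynomial ℂ := f.map (evalRingHom x) with hfx_def
  have hfxm : fx.Monic := hf.map _
  have hfxdeg : fx.natDegree = f.natDegree := hf.natDegree_map _
  have hcomp : ev.comp (mapRingHom (C : ℂ →+* Polynomial ℂ)) = evalRingHom x := by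
    apply Polynomial.ringHom_ext
    · intro a
      simp [hev_def]
    · simp [hev_def]
  have hFev : F.map ev = fx := by
    rw [hF_def, Polynomial.map_map, hcomp]
  have hevCX : ev (C X) = μ := by
    simp [hev_def]
  have hPev : (F - C (C X)).map ev = fx - C μ := by
    rw [Polynomial.map_sub, hFev, Polynomial.map_C, hevCX]
  have hQev : (derivative F).map ev = derivative fx := by
    rw [← derivative_map, hFev]
  have hPdeg : ((F - C (C X)).map ev).natDegree = (F - C (C X)).natDegree := by
    rw [hPev, natDegree_sub_C, natDegree_sub_C, hFdeg, hfxdeg]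
  have hQdegF : (derivative F).natDegree = f.natDegree - 1 :=
    hFdeg ▸ (deriv_lead' hFm (by rw [hFdeg]; exact hdeg)).1
  have hQdegfx : (derivative fx).natDegree = f.natDegree - 1 :=
    hfxdeg ▸ (deriv_lead hfxm (by rw [hfxdeg]; exact hdeg)).1
  have hQdeg : ((derivative F).map ev).natDegree = (derivative F).natDegree := by
    rw [hQev, hQdegfx, hQdegF]
  have hres := resultant'_map ev hPdeg hQdeg
  have hzero : resultant' ((F - C (C X)).map ev) ((derivative F).map ev) = 0 := by
    rw [hPev, hQev]
    apply resultant'_eq_zero_of_common_root y'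
    · rw [eval_sub, eval_C]
      rw [pval'] at h1
      rw [← hfx_def] at h1
      rw [h1, sub_self]
    · rw [pval'_derivative] at h2
      exact h2
    · rw [natDegree_sub_C, hfxdeg]
      omega
  have : ev (Rres' f) = 0 := by
    rw [Rres']
    rw [hres, hzero]
  rw [hev_def] at this
  simpa using this

lemma cz_bound {R : Polynomial (Polynomial ℂ)} {x μ : ℂ} {M : ℝ}
    (hres : (R.map (evalRingHom μ)).eval x = 0) (hx : 1 < ‖x‖)
    (hM : ∀ j < R.natDegree, ‖(R.coeff j).eval μ‖ ≤ M) :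
    ‖(R.leadingCoeff).eval μ‖ * ‖x‖ ≤ (R.natDegree : ℝ) * M := by
  set N := R.natDegree with hN_def
  set Rμ := R.map (evalRingHom μ) with hRμ_def
  have hcoeffμ : ∀ j, Rμ.coeff j = (R.coeff j).eval μ := by
    intro j; rw [hRμ_def, coeff_map]; rfl
  rcases eq_or_ne ((R.leadingCoeff).eval μ) 0 with hlc | hlc
  · rw [hlc, norm_zero, zero_mul]
    rcases Nat.eq_zero_or_pos N with hN | hN
    · rw [hN]; simp
    · have hM0 : 0 ≤ M := le_trans (norm_nonneg _) (hM 0 hN)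
      positivity
  · rcases Nat.eq_zero_or_pos N with hN | hN
    · exfalso
      have hRμdeg : Rμ.natDegree < 1 := by
        have hh : Rμ.natDegree ≤ N := natDegree_map_le
        omega
      have := eval_eq_sum_range' hRμdeg x
      rw [hres] at this  -- 0 = sum
      rw [Finset.sum_range_one, pow_zero, mul_one, hcoeffμ 0] at this
      have hl : R.leadingCoeff = R.coeff 0 := by rw [leadingCoeff, ← hN_def, hN]
      rw [hl] at hlc
      exact hlc this.symm
    · have hRμcoeff : Rμ.coeff N ≠ 0 := by
        rw [hcoeffμ N]
        rw [leadingCoeff] at hlc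
        exact hlc
      have hRμdeg : Rμ.natDegree = N := by
        refine le_antisymm (natDegree_map_le) (le_natDegree_of_ne_zero hRμcoeff)
      have hc : ∀ i < Rμ.natDegree, ‖Rμ.coeff i‖ ≤ M := by
        intro i hi
        rw [hcoeffμ i]
        exact hM i (by omega)
      have hbound := root_bound (by omega) hc hres
      rw [hRμdeg] at hbound
      have hRμlead : ‖Rμ.leadingCoeff‖ = ‖(R.leadingCoeff).eval μ‖ := by
        rw [leadingCoeff, hRμdeg, hcoeffμ N, leadingCoeff]
      rw [hRμlead] at hbound
      have hlcpos : 0 < ‖(R.leadingCoeff).eval μ‖ := norm_pos_iff.mpr hlc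
      have hxle : ‖x‖ ≤ (N:ℝ) * M / ‖(R.leadingCoeff).eval μ‖ := by
        rcases max_cases 1 ((N:ℝ) * M / ‖(R.leadingCoeff).eval μ‖) with ⟨heq, _⟩ | ⟨heq, hge⟩
        · rw [heq] at hbound; linarith
        · rw [heq] at hbound; exact hbound
      rw [le_div_iff₀ hlcpos] at hxle
      linarith








lemma Rres_eq (f : Polynomial (Polynomial ℂ)) : Rres f = Rres' f := rfl

lemma lojInfOn_def {E F : Type*} [NormedAddCommGroup E] [NormedAddCommGroup F]
    (f : E → F) (S : Set E) : lojInfOn f S = sSup (Real.toEReal '' NuSet f S) := rfl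

lemma le_loj {E F : Type*} [NormedAddCommGroup E] [NormedAddCommGroup F]
    {f : E → F} {S : Set E} {ν : ℝ} (h : ν ∈ NuSet f S) : (ν : EReal) ≤ lojInfOn f S :=
  le_sSup ⟨ν, h, rfl⟩

lemma loj_exists_gt {E F : Type*} [NormedAddCommGroup E] [NormedAddCommGroup F]
    {f : E → F} {S : Set E} {c : ℝ} (h : (c : EReal) < lojInfOn f S) :
    ∃ ν ∈ NuSet f S, c < ν := by
  obtain ⟨e, he, hce⟩ := lt_sSup_iff.mp h
  obtain ⟨ν, hν, rfl⟩ := he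
  exact ⟨ν, hν, EReal.coe_lt_coe_iff.mp hce⟩

lemma ereal_real {a : EReal} (h1 : a ≠ ⊥) (h2 : a < 0) :
    ∃ r : ℝ, a = (r : EReal) ∧ r < 0 := by
  induction a using EReal.rec with
  | bot => exact absurd rfl h1
  | coe r =>
    refine ⟨r, rfl, ?_⟩
    rw [← EReal.coe_zero] at h2
    exact EReal.coe_lt_coe_iff.mp h2
  | top => exact absurd h2 (by simp)


set_option maxHeartbeats 2000000 in
/-- Theorem 3.2. -/
theorem stmt2 (f : Polynomial (Polynomial ℂ)) (hf : NormalForm f)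
    (hdeg : 1 < f.natDegree) (lam0 : ℂ)
    (hloj : lojInfOn
      (fun z : ℂ × ℂ => (pval f z.1 z.2 - lam0, pval (derivative f) z.1 z.2))
      Set.univ < 0) :
    (lojInfOn (fun z : ℂ × ℂ => (pval f z.1 z.2 - lam0, pval (derivative f) z.1 z.2))
        Set.univ =
      lojInfOn (fun z : ℂ × ℂ => pval f z.1 z.2 - lam0) (Sy f)) ∧
    lam0 ∈ LambdaSet f ∧
    (lojInfOn (fun z : ℂ × ℂ => (pval f z.1 z.2 - lam0, pval (derivative f) z.1 z.2))
        Set.univ ≠ ⊥ →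
      lojInfOn (fun z : ℂ × ℂ => pval f z.1 z.2 - lam0) (Sy f) <
        lojInfOn (fun z : ℂ × ℂ => pval (derivative f) z.1 z.2) (Sfib f lam0)) := by
  obtain ⟨hmonic, -⟩ := hf
  set n := f.natDegree with hn_def
  set m := n - 1 with hm_def
  set FFp : ℂ × ℂ → ℂ × ℂ :=
    fun z => (pval f z.1 z.2 - lam0, pval (derivative f) z.1 z.2) with hFFp_def
  set g1 : ℂ × ℂ → ℂ := fun z => pval f z.1 z.2 - lam0 with hg1_def
  set g2 : ℂ × ℂ → ℂ := fun z => pval (derivative f) z.1 z.2 with hg2_def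
  have h0F : (0:ℝ) ∉ NuSet FFp Set.univ := by
    intro h
    have := le_loj h
    rw [EReal.coe_zero] at this
    exact absurd hloj (not_lt.mpr this)
  -- part (i)
  have hsub : NuSet FFp Set.univ ⊆ NuSet g1 (Sy f) := by
    intro ν hν
    exact easy1 lam0 hν
  have eq1 : lojInfOn FFp Set.univ = lojInfOn g1 (Sy f) := by
    refine le_antisymm (sSup_le_sSup (Set.image_mono hsub)) ?_
    refine sSup_le ?_
    rintro e ⟨ν, hν, rfl⟩
    rcases le_or_gt ν 0 with hle | hgt
    · exact le_loj (transfer1 hmonic hdeg lam0 hle hν)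
    · exact absurd (transfer1 hmonic hdeg lam0 le_rfl (NuSet.dcl hν hgt.le)) h0F
  refine ⟨eq1, ?_, ?_⟩
  -- part (ii)
  · show ((Rres f).leadingCoeff).eval lam0 = 0
    rw [Rres_eq]
    obtain ⟨R, hR⟩ : ∃ R0, R0 = Rres' f := ⟨Rres' f, rfl⟩
    rw [← hR]
    set N := R.natDegree with hN_def
    rw [← norm_eq_zero]
    have hmain : ∀ ε : ℝ, 0 < ε → ‖(R.leadingCoeff).eval lam0‖ < ε := by
      intro ε hε
      -- ν₁ between lojInfOn and 0
      obtain ⟨ν₁, hν₁a, hν₁b⟩ := EReal.lt_iff_exists_real_btwn.mp hloj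
      have hν₁0 : ν₁ < 0 := by
        rw [← EReal.coe_zero] at hν₁b
        exact EReal.coe_lt_coe_iff.mp hν₁b
      have hν₁notin : ν₁ ∉ NuSet FFp Set.univ := by
        intro h
        exact absurd (le_loj h) (not_le.mpr hν₁a)
      have hseq : ∀ B : ℝ, 0 < B → ∃ z : ℂ × ℂ, B < ‖z‖ ∧ ‖FFp z‖ < Real.rpow ‖z‖ ν₁ := by
        intro B hB
        by_contra hcon
        push_neg at hcon
        refine hν₁notin ⟨1, B, one_pos, hB, fun z _ hzB => ?_⟩
        rw [one_mul]
        exact hcon z hzB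
      -- continuity of eval of leading coefficient
      have hcont : Continuous fun μ : ℂ => (R.leadingCoeff).eval μ :=
        (R.leadingCoeff).continuous
      obtain ⟨δ, hδ0, hδ⟩ := Metric.continuous_iff.mp hcont lam0 (ε/2) (half_pos hε)
      -- bound on lower coefficients near lam0
      have hgcont : Continuous fun μ : ℂ => ∑ j ∈ Finset.range N, ‖(R.coeff j).eval μ‖ := by
        apply continuous_finset_sum
        intro j _
        exact ((R.coeff j).continuous).norm
      obtain ⟨M, hM⟩ := (isCompact_closedBall lam0 1).exists_bound_of_continuousOn
        hgcont.continuousOn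
      have hM0 : 0 ≤ M := by
        have h1 : lam0 ∈ Metric.closedBall lam0 1 := Metric.mem_closedBall_self zero_le_one
        have h2 := hM lam0 h1
        have h3 : (0:ℝ) ≤ ∑ j ∈ Finset.range N, ‖(R.coeff j).eval lam0‖ :=
          Finset.sum_nonneg fun j _ => norm_nonneg _
        have h4 := Real.le_norm_self (∑ j ∈ Finset.range N, ‖(R.coeff j).eval lam0‖)
        linarith
      have hMc : ∀ μ : ℂ, ‖μ - lam0‖ ≤ 1 → ∀ j < N, ‖(R.coeff j).eval μ‖ ≤ M := by
        intro μ hμ j hj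
        have hmem : μ ∈ Metric.closedBall lam0 1 := by
          rw [Metric.mem_closedBall, dist_eq_norm]
          exact hμ
        refine le_trans ?_ (le_trans (Real.le_norm_self _) (hM μ hmem))
        exact Finset.single_le_sum (f := fun j => ‖(R.coeff j).eval μ‖)
          (fun j _ => norm_nonneg _) (Finset.mem_range.mpr hj)
      -- choose L so that N*M/L < ε/2
      set L : ℝ := max 1 (2 * ((N:ℝ) * M) / ε + 1) with hL_def
      have hL1 : (1:ℝ) ≤ L := le_max_left _ _
      have hL2 : 2 * ((N:ℝ) * M) / ε + 1 ≤ L := le_max_right _ _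
      obtain ⟨K, hLK, hK1, hKb⟩ := xbound f hmonic hdeg L
      -- choose B
      have h2m : (0:ℝ) < 1 + 2 ^ m := by positivity
      set δ' : ℝ := min δ 1 / (1 + 2 ^ m) with hδ'_def
      have hδ'0 : 0 < δ' := by
        apply div_pos (lt_min hδ0 one_pos) h2m
      have htend := tendsto_rpow_neg_atTop (neg_pos.mpr hν₁0)
      simp only [neg_neg] at htend
      obtain ⟨B₀, hB₀⟩ := Filter.eventually_atTop.mp (htend.eventually (gt_mem_nhds hδ'0))
      set B : ℝ := max (K + 2) (max B₀ 1) with hB_def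
      have hBpos : 0 < B := lt_of_lt_of_le one_pos (le_trans (le_max_right B₀ 1) (le_max_right _ _))
      obtain ⟨z, hzB, hzF⟩ := hseq B hBpos
      have hzB₀ : B₀ ≤ ‖z‖ :=
        le_trans (le_trans (le_max_left B₀ 1) (le_max_right (K+2) _)) hzB.le
      have hε₀δ' : ‖FFp z‖ < δ' := lt_trans hzF (hB₀ ‖z‖ hzB₀)
      set ε₀ := ‖FFp z‖ with hε₀_def
      have hε₀0 : 0 ≤ ε₀ := norm_nonneg _
      have hεnorm : ε₀ = max ‖pval f z.1 z.2 - lam0‖ ‖pval (derivative f) z.1 z.2‖ := rfl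
      have hg1z : ‖pval f z.1 z.2 - lam0‖ ≤ ε₀ := by rw [hεnorm]; exact le_max_left _ _
      have hg2z : ‖pval (derivative f) z.1 z.2‖ ≤ ε₀ := by rw [hεnorm]; exact le_max_right _ _
      have hδ'le : δ' * (1 + 2 ^ m) = min δ 1 := by
        rw [hδ'_def, div_mul_cancel₀]
        exact h2m.ne'
      have hε₀1 : ε₀ < 1 := by
        have : δ' ≤ 1 := by
          rw [hδ'_def]
          rw [div_le_one h2m]
          have h1 : min δ 1 ≤ 1 := min_le_right _ _
          have h2 : (1:ℝ) ≤ 2 ^ m := one_le_pow₀ one_le_two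
          linarith
        linarith
      -- project
      obtain ⟨y', hroot, hpow, hmvt⟩ := proj f hmonic hdeg z.1 z.2
      have hn2 : (2:ℝ) ≤ (n:ℝ) := by exact_mod_cast hdeg
      have hyy' : ‖z.2 - y'‖ ≤ 1 :=
        smallDiffAux (norm_nonneg _) (le_trans hpow hg2z) hε₀1 hn2
      set μ : ℂ := pval f z.1 y' with hμ_def
      have hμb : ‖μ - lam0‖ ≤ (1 + 2 ^ m) * ε₀ := by
        have hsplit : μ - lam0 =
            (pval f z.1 z.2 - lam0) - (pval f z.1 z.2 - pval f z.1 y') := by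
          rw [hμ_def]; ring
        rw [hsplit]
        refine le_trans (norm_sub_le _ _) ?_
        have hmvt2 : ‖pval f z.1 z.2 - pval f z.1 y'‖ ≤ 2 ^ m * ε₀ * 1 := by
          refine le_trans hmvt ?_
          exact mul_le_mul (mul_le_mul_of_nonneg_left hg2z (by positivity : (0:ℝ) ≤ 2 ^ m))
            hyy' (norm_nonneg _) (by positivity)
        nlinarith
      have hμδ : ‖μ - lam0‖ < min δ 1 := by
        have : (1 + 2 ^ m) * ε₀ < (1 + 2 ^ m) * δ' := by
          exact mul_lt_mul_of_pos_left hε₀δ' h2m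
        rw [mul_comm (1 + 2 ^ m) δ', hδ'le] at this
        linarith
      -- the x-coordinate is large
      have hwn : ‖((z.1, y') : ℂ × ℂ)‖ = max ‖z.1‖ ‖y'‖ := Prod.norm_def _
      have hzn : ‖z‖ = max ‖z.1‖ ‖z.2‖ := Prod.norm_def z
      obtain ⟨hpn1, _⟩ := prodnorm (x := z.1) hyy'
      have hzK : K + 2 < ‖z‖ := lt_of_le_of_lt (le_max_left _ _) hzB
      have hwK : K + 1 < max ‖z.1‖ ‖y'‖ := by
        rw [hzn] at hzK
        linarith
      have hx1L : L < ‖z.1‖ := by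
        by_contra hcon
        push_neg at hcon
        have hy'K : ‖y'‖ ≤ K := hKb z.1 y' hroot hcon
        have hz1K : ‖z.1‖ ≤ K := le_trans hcon hLK
        have : max ‖z.1‖ ‖y'‖ ≤ K := max_le hz1K hy'K
        linarith
      have hx1 : 1 < ‖z.1‖ := lt_of_le_of_lt hL1 hx1L
      -- resultant vanishes
      have hresv : (R.map (evalRingHom μ)).eval z.1 = 0 := by
        rw [hR]
        exact Rres'_vanish f hmonic hdeg z.1 μ y' rfl hroot
      have hμ1 : ‖μ - lam0‖ ≤ 1 := le_of_lt (lt_of_lt_of_le hμδ (min_le_right _ _))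
      have hcz := cz_bound hresv hx1 (hMc μ hμ1)
      -- conclude
      have hx0 : (0:ℝ) < ‖z.1‖ := by linarith
      have hcz2 : ‖(R.leadingCoeff).eval μ‖ ≤ (N:ℝ) * M / ‖z.1‖ := by
        rw [le_div_iff₀ hx0]
        exact hcz
      have hNM : (N:ℝ) * M / ‖z.1‖ < ε / 2 := by
        rw [div_lt_iff₀ hx0]
        have hL2' : 2 * ((N:ℝ) * M) / ε + 1 < ‖z.1‖ := lt_of_le_of_lt hL2 hx1L
        have h2NM : 2 * ((N:ℝ) * M) / ε < ‖z.1‖ := by linarith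
        rw [div_lt_iff₀ hε] at h2NM
        linarith
      have hdist : dist ((R.leadingCoeff).eval μ) ((R.leadingCoeff).eval lam0) < ε/2 := by
        apply hδ
        rw [dist_eq_norm]
        exact lt_of_lt_of_le hμδ (min_le_left _ _)
      calc ‖(R.leadingCoeff).eval lam0‖
          ≤ ‖(R.leadingCoeff).eval lam0 - (R.leadingCoeff).eval μ‖
            + ‖(R.leadingCoeff).eval μ‖ := by
            have : (R.leadingCoeff).eval lam0 =
                ((R.leadingCoeff).eval lam0 - (R.leadingCoeff).eval μ)
                  + (R.leadingCoeff).eval μ := by ring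
            nth_rewrite 1 [this]
            exact norm_add_le _ _
        _ < ε/2 + ε/2 := by
            apply add_lt_add
            · rw [← dist_eq_norm, dist_comm]
              exact hdist
            · exact lt_of_le_of_lt hcz2 hNM
        _ = ε := by ring
    by_contra hne
    have hpos : 0 < ‖(R.leadingCoeff).eval lam0‖ := lt_of_le_of_ne (norm_nonneg _) (Ne.symm hne)
    exact absurd (hmain _ hpos) (lt_irrefl _)
  -- part (iii)
  · intro hnebot
    obtain ⟨r, hr, hr0⟩ := ereal_real hnebot hloj
    have heq1r : lojInfOn g1 (Sy f) = (r : EReal) := by rw [← eq1]; exact hr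
    have hm1 : 1 ≤ m := by omega
    have hmpos : (0:ℝ) < (m:ℝ) := by exact_mod_cast hm1
    have hnpos : (0:ℝ) < (n:ℝ) := by positivity
    have hnm : (n:ℝ) = (m:ℝ) + 1 := by
      rw [hm_def]
      push_cast [Nat.cast_sub (by omega : 1 ≤ n)]
      ring
    set τ : ℝ := r * n / m with hτ_def
    have hτr : τ < r := by
      rw [hτ_def, div_lt_iff₀ hmpos]
      nlinarith
    obtain ⟨ν, hν, hτν⟩ := loj_exists_gt (f := g1) (S := Sy f)
      (by rw [heq1r]; exact EReal.coe_lt_coe_iff.mpr hτr)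
    have hνr : ν ≤ r := by
      have := le_loj hν
      rw [heq1r] at this
      exact EReal.coe_le_coe_iff.mp this
    have hν0 : ν ≤ 0 := by linarith
    set ν' : ℝ := ν * (m:ℝ) / (n:ℝ) with hν'_def
    have hν'mem : ν' ∈ NuSet g2 (Sfib f lam0) :=
      transfer2 hmonic hdeg lam0 hν0 rfl hν
    have hrν' : r < ν' := by
      rw [hν'_def, lt_div_iff₀ hnpos]
      rw [hτ_def, div_lt_iff₀ hmpos] at hτν
      linarith
    calc lojInfOn g1 (Sy f) = (r : EReal) := heq1r
      _ < (ν' : EReal) := EReal.coe_lt_coe_iff.mpr hrν'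
      _ ≤ lojInfOn g2 (Sfib f lam0) := le_loj hν'mem


end
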